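/- Let T be a transformation semigroup on a set of n states, generated by a finite set Σ of transformations. Then there exists a transformation semigroup U on n+3 states, generated by |Σ|+1 transformations, which has at least |T| pairwise distinct J-classes. -/

import Mathlib

/-- (Total) transformations on `Q`, with left-to-right composition:
`q·(fg) = (q·f)·g`. -/
def Transf (Q : Type*) : Type _ := Q → Q

instance {Q : Type*} : Mul (Transf Q) := ⟨fun f g => fun q => g (f q)⟩

instance {Q : Type*} : Semigroup (Transf Q) where
  mul_assoc _ _ _ := rfl

section Green
variable {S : Type*} [Semigroup S]

/-- The two-sided ideal `S¹·s·S¹` as a subset of `S¹ = WithOne S`. -/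
def jIdeal (s : S) : Set (WithOne S) :=
  {x | ∃ z₁ z₂ : WithOne S, x = z₁ * (s : WithOne S) * z₂}

/-- Green's preorder `s ≤_J t` : `S¹sS¹ ⊆ S¹tS¹`. -/
def leJ (s t : S) : Prop := jIdeal s ⊆ jIdeal t

/-- Green's relation `J`. -/
def eqvJ (s t : S) : Prop := leJ s t ∧ leJ t s

end Green

namespace ManyJAux

theorem mulApply {Q : Type*} (f g : Transf Q) (x : Q) : (f * g) x = g (f x) := rfl

theorem leJ_exists {S : Type*} [Semigroup S] {s t : S} (h : leJ s t) :
    ∃ z₁ z₂ : WithOne S, (s : WithOne S) = z₁ * (t : WithOne S) * z₂ :=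
  h ⟨1, 1, by rw [one_mul, mul_one]⟩

theorem withOne_cases {α : Type*} (z : WithOne α) : z = 1 ∨ ∃ s : α, z = ↑s := by
  rcases z with _ | a
  · exact Or.inl rfl
  · exact Or.inr ⟨a, rfl⟩

/-- `Q` plus three extra states `e₁ = none`, `e₂ = some none`, `e₃ = some (some none)`. -/
abbrev OQ (Q : Type) : Type := Option (Option (Option Q))

def ii {Q : Type} (q : Q) : OQ Q := some (some (some q))

section C
variable {Q : Type} (q₀ : Q) (Sig : Set (Transf Q))

/-- The extension of a generator `σ` : acts as `σ` on `Q`, `e₁ ↦ q₀`,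
`e₂ ↦ e₂`, `e₃ ↦ q₀`. -/
def hat (σ : Transf Q) : Transf (OQ Q) := fun x =>
  match x with
  | none => ii q₀
  | some none => some none
  | some (some none) => ii q₀
  | some (some (some q)) => ii (σ q)

/-- The extra generator: identity on `Q`, `e₁ ↦ e₂ ↦ e₃ ↦ q₀`. -/
def gam : Transf (OQ Q) := fun x =>
  match x with
  | none => some none
  | some none => some (some none)
  | some (some none) => ii q₀
  | some (some (some q)) => ii q

/-- The generating set on the extended state set. -/
def Gen : Set (Transf (OQ Q)) := (hat q₀ '' Sig) ∪ {gam q₀}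

theorem gam_mem_Gen : gam q₀ ∈ Gen q₀ Sig := Or.inr rfl

/-- Every element of the closure maps `Q` into `Q`. -/
theorem closure_ii {u : Transf (OQ Q)} (hu : u ∈ Subsemigroup.closure (Gen q₀ Sig)) :
    ∀ q : Q, ∃ q' : Q, u (ii q) = ii q' := by
  induction hu using Subsemigroup.closure_induction with
  | mem f hf =>
    rcases hf with ⟨σ, _, rfl⟩ | hf
    · exact fun q => ⟨σ q, rfl⟩
    · cases hf; exact fun q => ⟨q, rfl⟩
  | mul f g hf hg ihf ihg =>
    intro q
    obtain ⟨q', h1⟩ := ihf q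
    obtain ⟨q'', h2⟩ := ihg q'
    exact ⟨q'', by rw [mulApply, h1, h2]⟩

/-- `e₁` is in the image of no element of the closure. -/
theorem closure_ne_e1 {u : Transf (OQ Q)} (hu : u ∈ Subsemigroup.closure (Gen q₀ Sig)) :
    ∀ x : OQ Q, u x ≠ none := by
  induction hu using Subsemigroup.closure_induction with
  | mem f hf =>
    rcases hf with ⟨σ, _, rfl⟩ | hf
    · intro x; rcases x with _ | _ | _ | q <;> simp [hat, ii]
    · cases hf; intro x; rcases x with _ | _ | _ | q <;> simp [gam, ii]
  | mul f g hf hg ihf ihg =>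
    intro x; rw [mulApply]; exact ihg _

/-- Every element of the closure maps `e₃` into `Q`. -/
theorem closure_e3 {u : Transf (OQ Q)} (hu : u ∈ Subsemigroup.closure (Gen q₀ Sig)) :
    ∃ q' : Q, u (some (some none)) = ii q' := by
  induction hu using Subsemigroup.closure_induction with
  | mem f hf =>
    rcases hf with ⟨σ, _, rfl⟩ | hf
    · exact ⟨q₀, rfl⟩
    · cases hf; exact ⟨q₀, rfl⟩
  | mul f g hf hg ihf ihg =>
    obtain ⟨q', h1⟩ := ihf
    obtain ⟨q'', h2⟩ := closure_ii q₀ Sig hg q'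
    exact ⟨q'', by rw [mulApply, h1, h2]⟩

/-- Every `t` in the closure of `Sig` lifts to an `h` in the closure of the
extended generators acting as `t` on `Q` and fixing `e₂`. -/
theorem exists_h {t : Transf Q} (ht : t ∈ Subsemigroup.closure Sig) :
    ∃ h : Transf (OQ Q), h ∈ Subsemigroup.closure (Gen q₀ Sig) ∧
      (∀ q, h (ii q) = ii (t q)) ∧ h (some none) = some none := by
  induction ht using Subsemigroup.closure_induction with
  | mem σ hσ =>
    exact ⟨hat q₀ σ, Subsemigroup.subset_closure (Or.inl ⟨σ, hσ, rfl⟩),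
      fun q => rfl, rfl⟩
  | mul a b ha hb iha ihb =>
    obtain ⟨h₁, m₁, f₁, g₁⟩ := iha
    obtain ⟨h₂, m₂, f₂, g₂⟩ := ihb
    refine ⟨h₁ * h₂, mul_mem m₁ m₂, fun q => ?_, ?_⟩
    · rw [mulApply, f₁, f₂]; rfl
    · rw [mulApply, g₁, g₂]

theorem v_e1 {h : Transf (OQ Q)} (he2 : h (some none) = some none) :
    (gam q₀ * h * gam q₀) none = some (some none) := by
  show gam q₀ (h (gam q₀ none)) = some (some none)
  rw [show gam q₀ (none : OQ Q) = some none from rfl, he2]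
  rfl

theorem v_ii {h : Transf (OQ Q)} {t : Transf Q} (hf : ∀ q, h (ii q) = ii (t q)) (q : Q) :
    (gam q₀ * h * gam q₀) (ii q) = ii (t q) := by
  show gam q₀ (h (gam q₀ (ii q))) = ii (t q)
  rw [show gam q₀ (ii q) = ii q from rfl, hf q]
  rfl

theorem v_notE1 {h : Transf (OQ Q)} {t : Transf Q}
    (hm : h ∈ Subsemigroup.closure (Gen q₀ Sig))
    (hf : ∀ q, h (ii q) = ii (t q)) :
    ∀ z : OQ Q, z ≠ none → ∃ q', (gam q₀ * h * gam q₀) z = ii q' := by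
  intro z hz
  rcases z with _ | _ | _ | q
  · exact absurd rfl hz
  · -- z = e₂ : goes to e₃, then into Q, stays in Q
    obtain ⟨q', hq'⟩ := closure_e3 q₀ Sig hm
    refine ⟨q', ?_⟩
    show gam q₀ (h (gam q₀ (some none))) = ii q'
    rw [show gam q₀ (some none : OQ Q) = some (some none) from rfl, hq']
    rfl
  · -- z = e₃ : goes to q₀ ∈ Q, stays in Q
    refine ⟨t q₀, ?_⟩
    show gam q₀ (h (gam q₀ (some (some none)))) = ii (t q₀)
    rw [show gam q₀ (some (some none) : OQ Q) = ii q₀ from rfl, hf q₀]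
    rfl
  · exact ⟨t q, v_ii q₀ hf q⟩

end C

/-- Conjugation of transformation semigroups by an equivalence of the state sets. -/
def transfCongr {α β : Type} (e : α ≃ β) : Transf α ≃* Transf β where
  toFun f := fun b => e (f (e.symm b))
  invFun f := fun a => e.symm (f (e a))
  left_inv f := funext fun a => by simp
  right_inv f := funext fun b => by simp
  map_mul' f g := funext fun b => by
    show e ((f * g) (e.symm b)) = e (g (e.symm (e (f (e.symm b)))))
    rw [Equiv.symm_apply_apply]
    rfl

end ManyJAux

open ManyJAux in
/-- For every transformation semigroup `T` on `n` states
generated by a finite set `Sig`, there is a transformation semigroup `U` on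
`n + 3` states, generated by `|Sig| + 1` transformations, having at least `|T|`
pairwise distinct `J`-classes (witnessed by a map `g : T → U` whose values are
pairwise non-`J`-equivalent). -/
theorem many_J_classes
    (n : ℕ) (Q : Type) [Fintype Q] (hQ : Fintype.card Q = n)
    (Sig : Finset (Transf Q)) (T : Subsemigroup (Transf Q))
    (hT : T = Subsemigroup.closure (Sig : Set (Transf Q))) :
    ∃ (Gam : Finset (Transf (Fin (n + 3)))) (U : Subsemigroup (Transf (Fin (n + 3)))),
      Gam.card = Sig.card + 1 ∧
      U = Subsemigroup.closure (Gam : Set (Transf (Fin (n + 3)))) ∧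
      ∃ g : ↥T → ↥U, ∀ x y : ↥T, eqvJ (g x) (g y) → x = y := by
  haveI : DecidableEq (Transf (Fin (n + 3))) :=
    Classical.decEq _
  rcases isEmpty_or_nonempty Q with hQe | hQn
  · -- degenerate case : `Q` empty, `T` is a subsingleton
    haveI : Subsingleton (Transf Q) := ⟨fun f g => funext fun q => (IsEmpty.false q).elim⟩
    haveI : Subsingleton ↥T := ⟨fun a b => Subtype.ext (Subsingleton.elim _ _)⟩
    have hS1 : Sig.card ≤ 1 := Finset.card_le_one.mpr fun a _ b _ => Subsingleton.elim a b
    obtain ⟨B, -, hB⟩ := Finset.exists_subset_card_eq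
      (s := (Finset.univ : Finset (Fin (n + 3)))) (n := Sig.card + 1)
      (by simp; omega)
    let cst : Fin (n + 3) → Transf (Fin (n + 3)) := fun i _ => i
    refine ⟨B.image cst, _, ?_, rfl, ?_⟩
    · rw [Finset.card_image_of_injective (f := cst) _ (fun i j hij => congrFun hij 0), hB]
    · have hBne : B.Nonempty := Finset.card_pos.mp (by omega)
      obtain ⟨i, hi⟩ := hBne
      refine ⟨fun _ => ⟨cst i, Subsemigroup.subset_closure ?_⟩,
        fun a b _ => Subsingleton.elim a b⟩
      exact Finset.mem_coe.mpr (Finset.mem_image_of_mem _ hi)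
  · obtain ⟨q₀⟩ := hQn
    have hcard : Fintype.card (OQ Q) = n + 3 := by
      simp [hQ]
    let e : OQ Q ≃ Fin (n + 3) := Fintype.equivFinOfCardEq hcard
    let Ψ : Transf (OQ Q) ≃* Transf (Fin (n + 3)) := transfCongr e
    set Gen' : Set (Transf (OQ Q)) := Gen q₀ (↑Sig) with hGen'
    set Gam : Finset (Transf (Fin (n + 3))) :=
      insert (Ψ (gam q₀)) (Sig.image (fun σ => Ψ (hat q₀ σ))) with hGam
    have hat_inj : Function.Injective (hat q₀ (Q := Q)) := by
      intro σ τ hστ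
      funext q
      have := congrFun hστ (ii q)
      simpa [hat, ii] using this
    have hcards : Gam.card = Sig.card + 1 := by
      rw [hGam, Finset.card_insert_of_notMem, Finset.card_image_of_injective (f := fun σ => Ψ (hat q₀ σ)) _
        (fun σ τ hh => hat_inj (Ψ.injective hh))]
      intro hmem
      obtain ⟨σ, -, hEq⟩ := Finset.mem_image.mp hmem
      have h2 : hat q₀ σ = gam q₀ := Ψ.injective hEq
      have := congrFun h2 (some none)
      simp [hat, gam] at this
    -- membership transfer between the two closures
    have fwd : ∀ v ∈ Subsemigroup.closure Gen',
        Ψ v ∈ Subsemigroup.closure (↑Gam : Set (Transf (Fin (n + 3)))) := by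
      intro v hv
      induction hv using Subsemigroup.closure_induction with
      | mem f hf =>
        apply Subsemigroup.subset_closure
        rcases hf with ⟨σ, hσ, rfl⟩ | hf
        · exact Finset.mem_coe.mpr (Finset.mem_insert_of_mem (Finset.mem_image_of_mem _ hσ))
        · cases hf
          exact Finset.mem_coe.mpr (Finset.mem_insert_self _ _)
      | mul f g hf hg ihf ihg =>
        rw [map_mul]
        exact mul_mem ihf ihg
    have back : ∀ w ∈ Subsemigroup.closure (↑Gam : Set (Transf (Fin (n + 3)))),
        Ψ.symm w ∈ Subsemigroup.closure Gen' := by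
      intro w hw
      induction hw using Subsemigroup.closure_induction with
      | mem f hf =>
        rcases Finset.mem_insert.mp (Finset.mem_coe.mp hf) with rfl | hmem' <;>
          [skip; obtain ⟨σ, hσ, rfl⟩ := Finset.mem_image.mp hmem']
        · rw [MulEquiv.symm_apply_apply]
          exact Subsemigroup.subset_closure (gam_mem_Gen q₀ _)
        · rw [MulEquiv.symm_apply_apply]
          exact Subsemigroup.subset_closure (Or.inl ⟨σ, hσ, rfl⟩)
      | mul f g hf hg ihf ihg =>
        rw [map_mul]
        exact mul_mem ihf ihg
    -- choose a lift for each element of T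
    have hmemT : ∀ x : ↥T, (x : Transf Q) ∈ Subsemigroup.closure (↑Sig : Set (Transf Q)) :=
      fun x => by rw [← hT]; exact x.2
    choose h hmem hfun he2 using fun x : ↥T => exists_h q₀ (↑Sig) (hmemT x)
    have gamMem : gam q₀ ∈ Subsemigroup.closure Gen' :=
      Subsemigroup.subset_closure (gam_mem_Gen q₀ _)
    set vv : ↥T → Transf (OQ Q) := fun x => gam q₀ * h x * gam q₀ with hvv
    have vmem : ∀ x : ↥T, vv x ∈ Subsemigroup.closure Gen' :=
      fun x => mul_mem (mul_mem gamMem (hmem x)) gamMem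
    refine ⟨Gam, Subsemigroup.closure ↑Gam, hcards, rfl,
      fun x => ⟨Ψ (vv x), fwd _ (vmem x)⟩, ?_⟩
    intro x y hxy
    obtain ⟨z₁, z₂, hz⟩ := leJ_exists hxy.1
    -- key facts about the marked elements
    have hx_e1 : vv x none = some (some none) := v_e1 q₀ (he2 x)
    have hy_e1 : vv y none = some (some none) := v_e1 q₀ (he2 y)
    have hy_notE1 : ∀ z : OQ Q, z ≠ none → ∃ q', vv y z = ii q' :=
      v_notE1 q₀ (↑Sig) (hmem y) (hfun y)
    rcases withOne_cases z₁ with rfl | ⟨x', rfl⟩ <;>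
      rcases withOne_cases z₂ with rfl | ⟨y', rfl⟩
    · -- both trivial : the two elements are equal
      rw [one_mul, mul_one] at hz
      have h1 : Ψ (vv x) = Ψ (vv y) := congrArg Subtype.val (WithOne.coe_inj.mp hz)
      have h2 : vv x = vv y := Ψ.injective h1
      apply Subtype.ext
      funext q
      have e1 : vv x (ii q) = ii ((x : Transf Q) q) := v_ii q₀ (hfun x) q
      have e2 : vv y (ii q) = ii ((y : Transf Q) q) := v_ii q₀ (hfun y) q
      have : ii ((x : Transf Q) q) = ii ((y : Transf Q) q) := by
        rw [← e1, ← e2, h2]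
      simpa [ii] using this
    · -- right multiplier only : marker would be mapped into Q
      exfalso
      rw [one_mul, ← WithOne.coe_mul] at hz
      have h1 : Ψ (vv x) = Ψ (vv y) * (y' : Transf (Fin (n + 3))) :=
        congrArg Subtype.val (WithOne.coe_inj.mp hz)
      have h2 : vv x = vv y * Ψ.symm (y' : Transf (Fin (n + 3))) := by
        have := congrArg Ψ.symm h1
        rwa [MulEquiv.symm_apply_apply, map_mul, MulEquiv.symm_apply_apply] at this
      have hy0 : Ψ.symm (y' : Transf (Fin (n + 3))) ∈ Subsemigroup.closure Gen' :=
        back _ y'.2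
      have := congrFun h2 none
      rw [hx_e1, mulApply, hy_e1] at this
      obtain ⟨q', hq'⟩ := closure_e3 q₀ (↑Sig) hy0
      rw [hq'] at this
      simp [ii] at this
    · -- left multiplier only : marker input is perturbed into Q
      exfalso
      rw [mul_one, ← WithOne.coe_mul] at hz
      have h1 : Ψ (vv x) = (x' : Transf (Fin (n + 3))) * Ψ (vv y) :=
        congrArg Subtype.val (WithOne.coe_inj.mp hz)
      have h2 : vv x = Ψ.symm (x' : Transf (Fin (n + 3))) * vv y := by
        have := congrArg Ψ.symm h1
        rwa [MulEquiv.symm_apply_apply, map_mul, MulEquiv.symm_apply_apply] at this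
      have hx0 : Ψ.symm (x' : Transf (Fin (n + 3))) ∈ Subsemigroup.closure Gen' :=
        back _ x'.2
      have := congrFun h2 none
      rw [hx_e1, mulApply] at this
      obtain ⟨q', hq'⟩ := hy_notE1 _ (closure_ne_e1 q₀ (↑Sig) hx0 none)
      rw [hq'] at this
      simp [ii] at this
    · -- both multipliers
      exfalso
      rw [← WithOne.coe_mul, ← WithOne.coe_mul] at hz
      have h1 : Ψ (vv x) =
          (x' : Transf (Fin (n + 3))) * Ψ (vv y) * (y' : Transf (Fin (n + 3))) :=
        congrArg Subtype.val (WithOne.coe_inj.mp hz)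
      have h2 : vv x = Ψ.symm (x' : Transf (Fin (n + 3))) * vv y *
          Ψ.symm (y' : Transf (Fin (n + 3))) := by
        have := congrArg Ψ.symm h1
        rwa [MulEquiv.symm_apply_apply, map_mul, map_mul,
          MulEquiv.symm_apply_apply] at this
      have hx0 : Ψ.symm (x' : Transf (Fin (n + 3))) ∈ Subsemigroup.closure Gen' :=
        back _ x'.2
      have hy0 : Ψ.symm (y' : Transf (Fin (n + 3))) ∈ Subsemigroup.closure Gen' :=
        back _ y'.2
      have := congrFun h2 none
      rw [hx_e1, mulApply, mulApply] at this
      obtain ⟨q', hq'⟩ := hy_notE1 _ (closure_ne_e1 q₀ (↑Sig) hx0 none)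
      rw [hq'] at this
      obtain ⟨q'', hq''⟩ := closure_ii q₀ (↑Sig) hy0 q'
      rw [hq''] at this
      simp [ii] at this
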